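/- Let p be a prime with p ≥ n and let q = p^d. Then every elementary abelian p-subgroup of GL_n(F_q) has order at most q^{⌊n²/4⌋}, and there exists an elementary abelian p-subgroup of GL_n(F_q) of order exactly q^{⌊n²/4⌋}. In particular, the largest rank of an elementary abelian p-subgroup of GL_n(F_q) is ⌊n²/4⌋·d. -/

import Mathlib

open Matrix

open Matrix Polynomial Module Submodule

namespace ElemAbAux

variable {n : ℕ} {k : Type*} [Field k] [Fintype k]

/-- Evaluation of a matrix at a vector, as a linear map in the matrix. -/
noncomputable def evL (v : Fin n → k) : Matrix (Fin n) (Fin n) k →ₗ[k] (Fin n → k) where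
  toFun a := a.mulVec v
  map_add' a b := Matrix.add_mulVec a b v
  map_smul' c a := Matrix.smul_mulVec c a v

omit [Fintype k] in
@[simp] lemma evL_apply (v : Fin n → k) (a : Matrix (Fin n) (Fin n) k) :
    evL v a = a.mulVec v := rfl

lemma sum_ite_fin (s : ℕ) : (∑ i : Fin (s+1), if i = 0 then 0 else 1) = s := by
  rw [Fin.sum_univ_succ]; simp [Fin.succ_ne_zero]

/-- Key perturbation claim. -/
lemma key_claim (hn : n ≤ Fintype.card k)
    (L : Submodule k (Matrix (Fin n) (Fin n) k)) (v₀ : Fin n → k)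
    (hmax : ∀ v, finrank k (L.map (evL v)) ≤ finrank k (L.map (evL v₀)))
    (hs : finrank k (L.map (evL v₀)) + 2 ≤ n)
    {a : Matrix (Fin n) (Fin n) k} (ha : a ∈ L) (hav : a.mulVec v₀ = 0)
    (w : Fin n → k) : a.mulVec w ∈ L.map (evL v₀) := by
  classical
  by_contra hz
  set W : Submodule k (Fin n → k) := L.map (evL v₀) with hW
  -- a basis of W with preimages in L
  let bW := Module.finBasis k W
  have hpre : ∀ i : Fin (finrank k W), ∃ c, c ∈ L ∧ c.mulVec v₀ = (bW i : Fin n → k) := by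
    intro i
    have : (bW i : Fin n → k) ∈ W := (bW i).2
    rcases Submodule.mem_map.mp this with ⟨c, hc, hcv⟩
    exact ⟨c, hc, hcv⟩
  choose b hbL hbv using hpre
  set z : Fin n → k := a.mulVec w with hzdef
  set m : ℕ := finrank k W + 1 with hm
  -- the families
  set F0 : Fin m → (Fin n → k) := Fin.cons z (fun i => (b i).mulVec v₀) with hF0def
  set Y0 : Fin m → (Fin n → k) := Fin.cons 0 (fun i => (b i).mulVec w) with hY0def
  have hxind : LinearIndependent k (fun i => (b i).mulVec v₀) := by
    have : (fun i => (b i).mulVec v₀) = fun i => ((bW i : W) : Fin n → k) := by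
      funext i; exact hbv i
    rw [this]
    exact bW.linearIndependent.map' W.subtype W.ker_subtype
  have hspanx : Submodule.span k (Set.range (fun i => (b i).mulVec v₀)) = W := by
    have h1 : (fun i => (b i).mulVec v₀) = W.subtype ∘ bW := by
      funext i; exact hbv i
    rw [h1, Set.range_comp, Submodule.span_image, bW.span_eq, Submodule.map_top,
      Submodule.range_subtype]
  have hF0 : LinearIndependent k F0 := by
    rw [hF0def, linearIndependent_fin_cons]
    exact ⟨hxind, by rw [hspanx]; exact hz⟩
  -- projection to k^m
  set S : Submodule k (Fin n → k) := Submodule.span k (Set.range F0) with hSdef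
  obtain ⟨C, hC⟩ := Submodule.exists_isCompl S
  set proj := Submodule.projectionOnto S C hC with hproj
  have hfrS : finrank k S = m := by
    rw [hSdef, finrank_span_eq_card hF0, Fintype.card_fin]
  set eS := (Module.finBasisOfFinrankEq k S hfrS).equivFun with heS
  set π : (Fin n → k) →ₗ[k] (Fin m → k) := eS.toLinearMap ∘ₗ proj with hπ
  have hπS : ∀ u : S, π (u : Fin n → k) = eS u := by
    intro u
    simp [hπ, hproj, Submodule.projectionOnto_apply_left hC u]
  have hmem : ∀ j, F0 j ∈ S := fun j => Submodule.subset_span (Set.mem_range_self j)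
  set F0S : Fin m → S := fun j => ⟨F0 j, hmem j⟩ with hF0S
  have hF0Sind : LinearIndependent k F0S := by
    apply LinearIndependent.of_comp S.subtype
    exact hF0
  have hπF0 : LinearIndependent k (fun j => π (F0 j)) := by
    have h1 : (fun j => π (F0 j)) = fun j => eS (F0S j) := by
      funext j; exact hπS (F0S j)
    rw [h1]
    exact hF0Sind.map' eS.toLinearMap eS.ker
  -- polynomial matrix
  set P : Matrix (Fin m) (Fin m) (Polynomial k) :=
    Matrix.of (fun i j => Polynomial.C (π (F0 j) i) + Polynomial.X * Polynomial.C (π (Y0 j) i))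
    with hP
  have heval : ∀ t : k, P.map (Polynomial.evalRingHom t) =
      Matrix.of (fun i j => π (F0 j + t • Y0 j) i) := by
    intro t
    ext i j
    have h2 : π (F0 j + t • Y0 j) = π (F0 j) + t • π (Y0 j) := by
      rw [map_add, _root_.map_smul]
    simp only [Matrix.map_apply, hP, Matrix.of_apply, Polynomial.coe_evalRingHom,
      Polynomial.eval_add, Polynomial.eval_mul, Polynomial.eval_C, Polynomial.eval_X, h2,
      Pi.add_apply, Pi.smul_apply, smul_eq_mul]
  have hdet : ∀ t : k, Polynomial.eval t P.det =
      (Matrix.of (fun i j => π (F0 j + t • Y0 j) i)).det := by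
    intro t
    rw [← heval t]
    exact (RingHom.map_det (Polynomial.evalRingHom t) P)
  have h0 : Polynomial.eval 0 P.det ≠ 0 := by
    rw [hdet 0]
    have hcols : (fun j => (Matrix.of (fun i j => π (F0 j + (0:k) • Y0 j) i))ᵀ j)
        = fun j => π (F0 j) := by
      funext j; funext i; simp [Matrix.transpose_apply]
    have hu : IsUnit (Matrix.of (fun i j => π (F0 j + (0:k) • Y0 j) i)) := by
      rw [← Matrix.linearIndependent_cols_iff_isUnit]
      change LinearIndependent k (fun j => (Matrix.of (fun i j => π (F0 j + (0:k) • Y0 j) i))ᵀ j)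
      rw [hcols]
      exact hπF0
    exact ((Matrix.isUnit_iff_isUnit_det _).mp hu).ne_zero
  -- degree bound
  have hentry : ∀ r c : Fin m, (P r c).natDegree ≤ if c = 0 then 0 else 1 := by
    intro r c
    by_cases hc : c = 0
    · subst hc
      have hY00 : Y0 0 = 0 := by rw [hY0def]; exact Fin.cons_zero _ _
      simp [hP, hY00]
    · rw [if_neg hc]
      refine (Polynomial.natDegree_add_le _ _).trans ?_
      simp only [Polynomial.natDegree_C, max_le_iff]
      constructor
      · exact (Polynomial.natDegree_C _).trans_le zero_le_one
      · refine (Polynomial.natDegree_mul_le).trans ?_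
        simp [Polynomial.natDegree_X, Polynomial.natDegree_C]
  have hdegdet : P.det.natDegree ≤ m - 1 := by
    rw [Matrix.det_apply']
    refine Polynomial.natDegree_sum_le_of_forall_le _ _ ?_
    intro σ _
    refine (Polynomial.natDegree_mul_le).trans ?_
    have h1 : (Equiv.Perm.sign σ : Polynomial k).natDegree = 0 := by
      have : ((Equiv.Perm.sign σ : ℤ) : Polynomial k).natDegree = 0 :=
        Polynomial.natDegree_intCast _
      simpa using this
    rw [h1, zero_add]
    refine (Polynomial.natDegree_prod_le _ _).trans ?_
    refine (Finset.sum_le_sum (fun i _ => hentry (σ i) i)).trans ?_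
    exact le_of_eq (sum_ite_fin (finrank k W))
  -- find a good t
  obtain ⟨t, ht0, htd⟩ : ∃ t : k, t ≠ 0 ∧ Polynomial.eval t P.det ≠ 0 := by
    by_contra hcon
    push_neg at hcon
    have hf : P.det ≠ 0 := fun h => h0 (by simp [h])
    have hsub : (Finset.univ.erase (0:k)) ⊆ P.det.roots.toFinset := by
      intro t ht
      rcases Finset.mem_erase.mp ht with ⟨ht0, -⟩
      rw [Multiset.mem_toFinset, Polynomial.mem_roots hf]
      exact hcon t ht0
    have hcard : Fintype.card k - 1 ≤ m - 1 := by
      calc Fintype.card k - 1 = (Finset.univ.erase (0:k)).card := by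
            rw [Finset.card_erase_of_mem (Finset.mem_univ _), Finset.card_univ]
        _ ≤ P.det.roots.toFinset.card := Finset.card_le_card hsub
        _ ≤ Multiset.card P.det.roots := P.det.roots.toFinset_card_le
        _ ≤ P.det.natDegree := Polynomial.card_roots' P.det
        _ ≤ m - 1 := hdegdet
    omega
  -- the perturbed family is independent
  have hu : IsUnit (Matrix.of (fun i j => π (F0 j + t • Y0 j) i)) := by
    rw [Matrix.isUnit_iff_isUnit_det, isUnit_iff_ne_zero]
    rw [← hdet t]
    exact htd
  have hcolind : LinearIndependent k (fun j => π (F0 j + t • Y0 j)) := by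
    have hcols : (fun j => (Matrix.of (fun i j => π (F0 j + t • Y0 j) i))ᵀ j)
        = fun j => π (F0 j + t • Y0 j) := by
      funext j; funext i; simp [Matrix.transpose_apply]
    rw [← hcols]
    exact Matrix.linearIndependent_cols_iff_isUnit.mpr hu
  have hFt : LinearIndependent k (fun j => F0 j + t • Y0 j) :=
    LinearIndependent.of_comp π hcolind
  -- all perturbed vectors lie in W' = L.map (evL (v₀ + t • w))
  set W' : Submodule k (Fin n → k) := L.map (evL (v₀ + t • w)) with hW'
  have hmem' : ∀ j, F0 j + t • Y0 j ∈ W' := by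
    intro j
    refine Fin.cases ?_ ?_ j
    · have hF00 : F0 0 = z := by rw [hF0def]; exact Fin.cons_zero _ _
      have hY00 : Y0 0 = 0 := by rw [hY0def]; exact Fin.cons_zero _ _
      rw [hF00, hY00, smul_zero, add_zero]
      have haw : a.mulVec (v₀ + t • w) = t • z := by
        rw [Matrix.mulVec_add, hav, zero_add, Matrix.mulVec_smul]
      have h1 : evL (v₀ + t • w) a ∈ W' := Submodule.mem_map_of_mem ha
      rw [evL_apply, haw] at h1
      have h2 : z = t⁻¹ • (t • z) := by rw [smul_smul, inv_mul_cancel₀ ht0, one_smul]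
      rw [h2]
      exact Submodule.smul_mem _ _ h1
    · intro i
      have hF0s : F0 i.succ = (b i).mulVec v₀ := by rw [hF0def]; exact Fin.cons_succ _ _ _
      have hY0s : Y0 i.succ = (b i).mulVec w := by rw [hY0def]; exact Fin.cons_succ _ _ _
      rw [hF0s, hY0s]
      have h1 : evL (v₀ + t • w) (b i) ∈ W' := Submodule.mem_map_of_mem (hbL i)
      rw [evL_apply, Matrix.mulVec_add, Matrix.mulVec_smul] at h1
      exact h1
  -- contradiction with maximality
  have hspan : Submodule.span k (Set.range (fun j => F0 j + t • Y0 j)) ≤ W' := by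
    rw [Submodule.span_le]
    rintro u ⟨j, rfl⟩
    exact hmem' j
  have hge : m ≤ finrank k W' := by
    have h1 : finrank k (Submodule.span k (Set.range (fun j => F0 j + t • Y0 j))) = m := by
      rw [finrank_span_eq_card hFt, Fintype.card_fin]
    rw [← h1]
    exact Submodule.finrank_mono hspan
  have := hmax (v₀ + t • w)
  rw [← hW'] at this
  omega

lemma nat_ineq1 (n : ℕ) (hn : 2 ≤ n) : n - 1 ≤ n^2/4 := by
  obtain ⟨m, rfl⟩ : ∃ m, n = m + 2 := ⟨n - 2, by omega⟩
  have h : (m+2)^2 = m*m + 4*m + 4 := by ring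
  rw [Nat.le_div_iff_mul_le (by norm_num)]
  omega

lemma nat_ineq2 (s u : ℕ) : (s + (u * s)) ≤ (s + 1 + u)^2 / 4 := by
  rw [Nat.le_div_iff_mul_le (by norm_num)]
  zify
  nlinarith [sq_nonneg ((s:ℤ) - u - 1)]

/-- Schur-type bound: a commuting linear space of nilpotent matrices has
dimension at most `⌊n²/4⌋`, provided the (finite) field has at least `n` elements. -/
lemma schur_nilpotent (hn : n ≤ Fintype.card k)
    (L : Submodule k (Matrix (Fin n) (Fin n) k))
    (hcomm : ∀ a ∈ L, ∀ b ∈ L, a * b = b * a)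
    (hnil : ∀ a ∈ L, IsNilpotent a) :
    finrank k L ≤ n^2/4 := by
  classical
  -- choose v₀ maximizing the dimension of the image
  obtain ⟨v₀, -, hmax⟩ := Finset.exists_max_image (Finset.univ : Finset (Fin n → k))
    (fun v => finrank k (L.map (evL v))) Finset.univ_nonempty
  have hmax : ∀ v, finrank k (L.map (evL v)) ≤ finrank k (L.map (evL v₀)) :=
    fun v => hmax v (Finset.mem_univ v)
  set W : Submodule k (Fin n → k) := L.map (evL v₀) with hW
  set s : ℕ := finrank k W with hsdef
  -- rank-nullity
  set φ : L →ₗ[k] (Fin n → k) := (evL v₀) ∘ₗ L.subtype with hφ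
  have hrange : LinearMap.range φ = W := by
    rw [hφ, LinearMap.range_comp, Submodule.range_subtype]
  have hrn : finrank k L = s + finrank k (LinearMap.ker φ) := by
    rw [← LinearMap.finrank_range_add_finrank_ker φ, hrange]
  by_cases hs0 : s = 0
  · -- L = ⊥
    have hL : ∀ a ∈ L, a = (0 : Matrix (Fin n) (Fin n) k) := by
      intro a haL
      have hav : ∀ v : Fin n → k, a.mulVec v = 0 := by
        intro v
        have h1 : finrank k (L.map (evL v)) = 0 := le_antisymm (hs0 ▸ hmax v) (Nat.zero_le _)
        have h2 : L.map (evL v) = ⊥ := Submodule.finrank_eq_zero.mp h1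
        have h3 : evL v a ∈ L.map (evL v) := Submodule.mem_map_of_mem haL
        rw [h2] at h3
        simpa using h3
      ext i j
      have := congrFun (hav (Pi.single j 1)) i
      rwa [Matrix.mulVec_single_one, Matrix.col_apply, Pi.zero_apply] at this
    have : L = ⊥ := by
      rw [Submodule.eq_bot_iff]; exact hL
    rw [this]
    simp
  · have hs1 : 1 ≤ s := Nat.one_le_iff_ne_zero.mpr hs0
    -- v₀ ∉ W
    have hv₀W : v₀ ∉ W := by
      intro hmem
      rcases Submodule.mem_map.mp hmem with ⟨c, hcL, hcv⟩
      rw [evL_apply] at hcv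
      obtain ⟨N, hN⟩ := hnil c hcL
      have hiter : ∀ j : ℕ, (c^j).mulVec v₀ = v₀ := by
        intro j
        induction j with
        | zero => simp
        | succ j ih =>
          have : c^(j+1) = c^j * c := by rw [pow_succ]
          rw [this, ← Matrix.mulVec_mulVec, hcv, ih]
      have hv0 : v₀ = 0 := by
        have := hiter N
        rw [hN] at this
        simpa using this.symm
      apply hs0
      have : W = ⊥ := by
        rw [hW, Submodule.eq_bot_iff]
        rintro u ⟨c', -, rfl⟩
        rw [evL_apply, hv0, Matrix.mulVec_zero]
      rw [hsdef, this]
      simp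
    have hv₀0 : v₀ ≠ 0 := fun h => hv₀W (h ▸ Submodule.zero_mem W)
    -- elements of ker kill W
    have hkerW : ∀ c ∈ L, c.mulVec v₀ = 0 → ∀ u ∈ W, c.mulVec u = 0 := by
      intro c hcL hcv u huW
      rcases Submodule.mem_map.mp huW with ⟨d, hdL, rfl⟩
      rw [evL_apply, Matrix.mulVec_mulVec, hcomm c hcL d hdL, ← Matrix.mulVec_mulVec, hcv,
        Matrix.mulVec_zero]
    -- U = W ⊔ span {v₀}
    set U : Submodule k (Fin n → k) := W ⊔ Submodule.span k {v₀} with hU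
    have hWinf : W ⊓ Submodule.span k {v₀} = ⊥ := by
      rw [Submodule.eq_bot_iff]
      rintro u ⟨huW, huv⟩
      rcases Submodule.mem_span_singleton.mp huv with ⟨c, rfl⟩
      by_cases hc : c = 0
      · rw [hc, zero_smul]
      · exfalso
        apply hv₀W
        have := Submodule.smul_mem W c⁻¹ huW
        rwa [smul_smul, inv_mul_cancel₀ hc, one_smul] at this
    have hUrank : finrank k U = s + 1 := by
      have := Submodule.finrank_sup_add_finrank_inf_eq W (Submodule.span k {v₀})
      rw [hWinf, finrank_span_singleton hv₀0] at this
      simpa using this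
    have hUlen : finrank k U ≤ n := by
      have := Submodule.finrank_le U
      rwa [Module.finrank_fintype_fun_eq_card, Fintype.card_fin] at this
    -- elements of ker kill U
    have hkerU : ∀ c ∈ L, c.mulVec v₀ = 0 → ∀ u ∈ U, c.mulVec u = 0 := by
      intro c hcL hcv u huU
      rcases Submodule.mem_sup.mp huU with ⟨x, hx, y, hy, rfl⟩
      rcases Submodule.mem_span_singleton.mp hy with ⟨r, rfl⟩
      rw [Matrix.mulVec_add, hkerW c hcL hcv x hx, Matrix.mulVec_smul, hcv, smul_zero, add_zero]
    by_cases hcase : s + 1 = n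
    · -- U is everything; ker φ = ⊥
      have hUtop : U = ⊤ := by
        apply Submodule.eq_top_of_finrank_eq
        rw [hUrank, hcase, Module.finrank_fintype_fun_eq_card, Fintype.card_fin]
      have hker : LinearMap.ker φ = ⊥ := by
        rw [Submodule.eq_bot_iff]
        rintro ⟨c, hcL⟩ hc
        have hcv : c.mulVec v₀ = 0 := hc
        have : ∀ u : Fin n → k, c.mulVec u = 0 := by
          intro u
          exact hkerU c hcL hcv u (hUtop ▸ Submodule.mem_top)
        have hc0 : c = 0 := by
          ext i j
          have := congrFun (this (Pi.single j 1)) i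
          rwa [Matrix.mulVec_single_one, Matrix.col_apply, Pi.zero_apply] at this
        exact Subtype.ext hc0
      rw [hrn, hker]
      simp only [finrank_bot, add_zero]
      have : s = n - 1 := by omega
      rw [this]
      exact nat_ineq1 n (by omega)
    · -- the hard case
      have hs2 : s + 2 ≤ n := by omega
      -- every element of ker φ gives a linear map (V/U) →ₗ W
      have hclaim : ∀ c ∈ L, c.mulVec v₀ = 0 → ∀ u : Fin n → k, c.mulVec u ∈ W :=
        fun c hcL hcv u => key_claim hn L v₀ hmax hs2 hcL hcv u
      -- injection from ker φ into Hom(V/U, W)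
      have hkerdef : ∀ c : LinearMap.ker φ, ((c : L) : Matrix (Fin n) (Fin n) k) ∈ L ∧
          ((c : L) : Matrix (Fin n) (Fin n) k).mulVec v₀ = 0 := by
        rintro ⟨⟨c, hcL⟩, hc⟩
        exact ⟨hcL, hc⟩
      set J : LinearMap.ker φ → (((Fin n → k) ⧸ U) →ₗ[k] W) := fun c =>
        Submodule.liftQ U
          ((Matrix.mulVecLin ((c : L) : Matrix (Fin n) (Fin n) k)).codRestrict W
            (fun u => hclaim _ (hkerdef c).1 (hkerdef c).2 u))
          (by
            intro u huU
            rw [LinearMap.mem_ker]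
            apply Subtype.ext
            exact hkerU _ (hkerdef c).1 (hkerdef c).2 u huU) with hJdef
      have happ : ∀ (c : LinearMap.ker φ) (u : Fin n → k),
          ((J c (Submodule.Quotient.mk u) : W) : Fin n → k)
            = ((c : L) : Matrix (Fin n) (Fin n) k).mulVec u := fun c u => rfl
      have hJ : Function.Injective J := by
        intro c c' hcc
        have h1 : ∀ u : Fin n → k,
            ((c : L) : Matrix (Fin n) (Fin n) k).mulVec u
              = ((c' : L) : Matrix (Fin n) (Fin n) k).mulVec u := by
          intro u
          rw [← happ c u, ← happ c' u, hcc]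
        apply Subtype.ext
        apply Subtype.ext
        ext i j
        have := congrFun (h1 (Pi.single j 1)) i
        rwa [Matrix.mulVec_single_one, Matrix.mulVec_single_one] at this
      -- cardinalities
      haveI : Finite (((Fin n → k) ⧸ U) →ₗ[k] W) :=
        Finite.of_injective _ (DFunLike.coe_injective)
      have hcard1 : Nat.card (LinearMap.ker φ) ≤ Nat.card (((Fin n → k) ⧸ U) →ₗ[k] W) :=
        Nat.card_le_card_of_injective J hJ
      have hcardker : Nat.card (LinearMap.ker φ)
          = Fintype.card k ^ finrank k (LinearMap.ker φ) := by
        haveI := Fintype.ofFinite (LinearMap.ker φ)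
        rw [Nat.card_eq_fintype_card]
        exact Module.card_eq_pow_finrank (K := k) (V := LinearMap.ker φ)
      have hcardHom : Nat.card (((Fin n → k) ⧸ U) →ₗ[k] W)
          = Fintype.card k ^ finrank k (((Fin n → k) ⧸ U) →ₗ[k] W) := by
        haveI := Fintype.ofFinite (((Fin n → k) ⧸ U) →ₗ[k] W)
        rw [Nat.card_eq_fintype_card]
        exact Module.card_eq_pow_finrank (K := k) (V := ((Fin n → k) ⧸ U) →ₗ[k] W)
      have hfr : finrank k (LinearMap.ker φ) ≤ finrank k (((Fin n → k) ⧸ U) →ₗ[k] W) := by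
        have h2 : (1:ℕ) < Fintype.card k := Fintype.one_lt_card
        rw [hcardker, hcardHom] at hcard1
        exact (Nat.pow_le_pow_iff_right h2).mp hcard1
      have hfrHom : finrank k (((Fin n → k) ⧸ U) →ₗ[k] W) = (n - (s+1)) * s := by
        rw [Module.finrank_linearMap]
        congr 1
        have := Submodule.finrank_quotient_add_finrank U
        rw [hUrank, Module.finrank_fintype_fun_eq_card, Fintype.card_fin] at this
        omega
      rw [hrn]
      calc s + finrank k (LinearMap.ker φ) ≤ s + (n - (s+1)) * s := by omega
        _ ≤ (s + 1 + (n - (s+1)))^2/4 := nat_ineq2 s (n - (s+1))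
        _ = n^2/4 := by
            have h3 : s + 1 + (n - (s+1)) = n := by omega
            rw [h3]

end ElemAbAux


open Matrix Polynomial Module Submodule

namespace ElemAbAux2

variable {n : ℕ} {k : Type*} [Field k]

/-- Strictly block-upper-triangular support condition. -/
def BlockPred (m : ℕ) (N : Matrix (Fin n) (Fin n) k) : Prop :=
  ∀ i j : Fin n, ¬((i:ℕ) < m ∧ m ≤ (j:ℕ)) → N i j = 0

lemma blockPred_mul {m : ℕ} {N M : Matrix (Fin n) (Fin n) k}
    (hN : BlockPred m N) (hM : BlockPred m M) : N * M = 0 := by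
  ext i j
  rw [Matrix.mul_apply, Matrix.zero_apply]
  apply Finset.sum_eq_zero
  intro l _
  by_cases h1 : (i:ℕ) < m ∧ m ≤ (l:ℕ)
  · rw [hM l j (by omega), mul_zero]
  · rw [hN i l h1, zero_mul]

lemma blockPred_add {m : ℕ} {N M : Matrix (Fin n) (Fin n) k}
    (hN : BlockPred m N) (hM : BlockPred m M) : BlockPred m (N + M) := by
  intro i j h
  rw [Matrix.add_apply, hN i j h, hM i j h, add_zero]

lemma blockPred_neg {m : ℕ} {N : Matrix (Fin n) (Fin n) k}
    (hN : BlockPred m N) : BlockPred m (-N) := by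
  intro i j h
  rw [Matrix.neg_apply, hN i j h, neg_zero]

lemma blockPred_zero {m : ℕ} : BlockPred m (0 : Matrix (Fin n) (Fin n) k) :=
  fun i j _ => rfl

/-- The subgroup of `GL n k` of block unipotent matrices. -/
def blockSubgroup (m : ℕ) : Subgroup (GL (Fin n) k) where
  carrier := {g | BlockPred m ((g : Matrix (Fin n) (Fin n) k) - 1)}
  one_mem' := by
    have : ((1 : GL (Fin n) k) : Matrix (Fin n) (Fin n) k) - 1 = 0 := by
      rw [Units.val_one, sub_self]
    simpa [Set.mem_setOf_eq, this] using blockPred_zero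
  mul_mem' := by
    intro g h hg hh
    simp only [Set.mem_setOf_eq] at *
    have hmul : ((g * h : GL (Fin n) k) : Matrix (Fin n) (Fin n) k) - 1
        = ((g : Matrix (Fin n) (Fin n) k) - 1) * ((h : Matrix (Fin n) (Fin n) k) - 1)
          + (((g : Matrix (Fin n) (Fin n) k) - 1) + ((h : Matrix (Fin n) (Fin n) k) - 1)) := by
      rw [Units.val_mul]; noncomm_ring
    rw [hmul, blockPred_mul hg hh, zero_add]
    exact blockPred_add hg hh
  inv_mem' := by
    intro g hg
    simp only [Set.mem_setOf_eq] at *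
    set N : Matrix (Fin n) (Fin n) k := (g : Matrix (Fin n) (Fin n) k) - 1 with hN
    have hNN : N * N = 0 := blockPred_mul hg hg
    have hginv : ((g⁻¹ : GL (Fin n) k) : Matrix (Fin n) (Fin n) k) = 1 - N := by
      have h1 : (g : Matrix (Fin n) (Fin n) k) * (1 - N) = 1 := by
        have h2 : (g : Matrix (Fin n) (Fin n) k) = 1 + N := by rw [hN]; abel
        rw [h2]
        have : (1 + N) * (1 - N) = 1 + (N * N) * (-1) := by noncomm_ring
        rw [this, hNN, zero_mul, add_zero]
      calc ((g⁻¹ : GL (Fin n) k) : Matrix (Fin n) (Fin n) k)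
          = ((g⁻¹ : GL (Fin n) k) : Matrix (Fin n) (Fin n) k)
              * ((g : Matrix (Fin n) (Fin n) k) * (1 - N)) := by rw [h1, mul_one]
        _ = (((g⁻¹ * g : GL (Fin n) k)) : Matrix (Fin n) (Fin n) k) * (1 - N) := by
              rw [Units.val_mul, mul_assoc]
        _ = 1 - N := by rw [inv_mul_cancel g, Units.val_one, one_mul]
    rw [hginv]
    have : (1 : Matrix (Fin n) (Fin n) k) - N - 1 = -N := by abel
    rw [this]
    exact blockPred_neg hg

lemma mem_blockSubgroup {m : ℕ} {g : GL (Fin n) k} :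
    g ∈ blockSubgroup (n := n) (k := k) m ↔ BlockPred m ((g : Matrix (Fin n) (Fin n) k) - 1) :=
  Iff.rfl

lemma blockSubgroup_comm {m : ℕ} {g h : GL (Fin n) k}
    (hg : g ∈ blockSubgroup (n := n) (k := k) m) (hh : h ∈ blockSubgroup (n := n) (k := k) m) :
    g * h = h * g := by
  rw [mem_blockSubgroup] at hg hh
  apply Units.ext
  rw [Units.val_mul, Units.val_mul]
  set N : Matrix (Fin n) (Fin n) k := (g : Matrix (Fin n) (Fin n) k) - 1 with hN
  set M : Matrix (Fin n) (Fin n) k := (h : Matrix (Fin n) (Fin n) k) - 1 with hM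
  have hNM : N * M = 0 := blockPred_mul hg hh
  have hMN : M * N = 0 := blockPred_mul hh hg
  have h1 : (g : Matrix (Fin n) (Fin n) k) = 1 + N := by rw [hN]; abel
  have h2 : (h : Matrix (Fin n) (Fin n) k) = 1 + M := by rw [hM]; abel
  rw [h1, h2]
  have e1 : (1 + N) * (1 + M) = 1 + N + M + N * M := by noncomm_ring
  have e2 : (1 + M) * (1 + N) = 1 + N + M + M * N := by noncomm_ring
  rw [e1, e2, hNM, hMN]

lemma blockSubgroup_pow_p {p m : ℕ} [CharP k p] {g : GL (Fin n) k}
    (hg : g ∈ blockSubgroup (n := n) (k := k) m) : g ^ p = 1 := by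
  rw [mem_blockSubgroup] at hg
  apply Units.ext
  rw [Units.val_pow_eq_pow_val, Units.val_one]
  set N : Matrix (Fin n) (Fin n) k := (g : Matrix (Fin n) (Fin n) k) - 1 with hN
  have hNN : N * N = 0 := blockPred_mul hg hg
  have h1 : (g : Matrix (Fin n) (Fin n) k) = 1 + N := by rw [hN]; abel
  have hpow : ∀ j : ℕ, (1 + N) ^ j = 1 + (j : ℕ) • N := by
    intro j
    induction j with
    | zero => simp
    | succ j ih =>
      rw [pow_succ, ih]
      have hMN : ((j:ℕ) • N) * N = 0 := by rw [smul_mul_assoc, hNN, smul_zero]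
      have : (1 + (j:ℕ) • N) * (1 + N) = 1 + N + (j:ℕ) • N + ((j:ℕ) • N) * N := by
        noncomm_ring
      rw [this, hMN, add_zero, succ_nsmul]
      abel
  rw [h1, hpow p]
  have : (p : ℕ) • N = ((p : k)) • N := by rw [Nat.cast_smul_eq_nsmul]
  rw [this, CharP.cast_eq_zero k p, zero_smul, add_zero]

/-- The elements of the block subgroup biject with block matrices. -/
noncomputable def blockEquiv (m : ℕ) (hm : m ≤ n) :
    (blockSubgroup (n := n) (k := k) m) ≃ (Fin m → Fin (n - m) → k) where
  toFun g := fun a b =>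
    ((g.1 : Matrix (Fin n) (Fin n) k) - 1) ⟨a.1, by omega⟩ ⟨m + b.1, by omega⟩
  invFun f :=
    ⟨⟨1 + Matrix.of (fun i j : Fin n =>
        if h : (i:ℕ) < m ∧ m ≤ (j:ℕ) then f ⟨i.1, h.1⟩ ⟨j.1 - m, by omega⟩ else 0),
      1 - Matrix.of (fun i j : Fin n =>
        if h : (i:ℕ) < m ∧ m ≤ (j:ℕ) then f ⟨i.1, h.1⟩ ⟨j.1 - m, by omega⟩ else 0),
      by
        set N := Matrix.of (fun i j : Fin n =>
          if h : (i:ℕ) < m ∧ m ≤ (j:ℕ) then f ⟨i.1, h.1⟩ ⟨j.1 - m, by omega⟩ else 0) with hNd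
        have hNb : BlockPred m N := by
          intro i j h
          simp only [hNd, Matrix.of_apply]
          rw [dif_neg h]
        have hNN : N * N = 0 := blockPred_mul hNb hNb
        have : (1 + N) * (1 - N) = 1 + (N * N) * (-1) := by noncomm_ring
        rw [this, hNN, zero_mul, add_zero],
      by
        set N := Matrix.of (fun i j : Fin n =>
          if h : (i:ℕ) < m ∧ m ≤ (j:ℕ) then f ⟨i.1, h.1⟩ ⟨j.1 - m, by omega⟩ else 0) with hNd
        have hNb : BlockPred m N := by
          intro i j h
          simp only [hNd, Matrix.of_apply]
          rw [dif_neg h]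
        have hNN : N * N = 0 := blockPred_mul hNb hNb
        have : (1 - N) * (1 + N) = 1 + (N * N) * (-1) := by noncomm_ring
        rw [this, hNN, zero_mul, add_zero]⟩,
      by
        rw [mem_blockSubgroup]
        intro i j h
        show ((1 + Matrix.of _ : Matrix (Fin n) (Fin n) k) - 1) i j = 0
        have : (1 + Matrix.of (fun i j : Fin n =>
            if h : (i:ℕ) < m ∧ m ≤ (j:ℕ) then f ⟨i.1, h.1⟩ ⟨j.1 - m, by omega⟩ else 0)
              : Matrix (Fin n) (Fin n) k) - 1
            = Matrix.of (fun i j : Fin n =>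
            if h : (i:ℕ) < m ∧ m ≤ (j:ℕ) then f ⟨i.1, h.1⟩ ⟨j.1 - m, by omega⟩ else 0) := by
          abel
        rw [this, Matrix.of_apply, dif_neg h]⟩
  left_inv := by
    rintro ⟨g, hg⟩
    rw [mem_blockSubgroup] at hg
    apply Subtype.ext
    apply Units.ext
    show (1 : Matrix (Fin n) (Fin n) k) + Matrix.of _ = (g : Matrix (Fin n) (Fin n) k)
    have : ∀ i j : Fin n, (Matrix.of (fun i j : Fin n =>
        if h : (i:ℕ) < m ∧ m ≤ (j:ℕ) then
          ((g : Matrix (Fin n) (Fin n) k) - 1) ⟨(i:ℕ), by omega⟩ ⟨m + ((j:ℕ) - m), by omega⟩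
        else 0)) i j = ((g : Matrix (Fin n) (Fin n) k) - 1) i j := by
      intro i j
      rw [Matrix.of_apply]
      by_cases h : (i:ℕ) < m ∧ m ≤ (j:ℕ)
      · rw [dif_pos h]
        have e1 : (⟨(i:ℕ), by omega⟩ : Fin n) = i := Fin.ext rfl
        have e2 : (⟨m + ((j:ℕ) - m), by omega⟩ : Fin n) = j := Fin.ext (by simp; omega)
        rw [e1, e2]
      · rw [dif_neg h, hg i j h]
    have h2 : Matrix.of (fun i j : Fin n =>
        if h : (i:ℕ) < m ∧ m ≤ (j:ℕ) then
          ((g : Matrix (Fin n) (Fin n) k) - 1) ⟨(i:ℕ), by omega⟩ ⟨m + ((j:ℕ) - m), by omega⟩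
        else 0) = (g : Matrix (Fin n) (Fin n) k) - 1 := by
      ext i j; exact this i j
    rw [h2]
    abel
  right_inv := by
    intro f
    funext a b
    show ((1 + Matrix.of _ : Matrix (Fin n) (Fin n) k) - 1) _ _ = f a b
    have h3 : (1 + Matrix.of (fun i j : Fin n =>
        if h : (i:ℕ) < m ∧ m ≤ (j:ℕ) then f ⟨i.1, h.1⟩ ⟨j.1 - m, by omega⟩ else 0)
          : Matrix (Fin n) (Fin n) k) - 1
        = Matrix.of (fun i j : Fin n =>
        if h : (i:ℕ) < m ∧ m ≤ (j:ℕ) then f ⟨i.1, h.1⟩ ⟨j.1 - m, by omega⟩ else 0) := by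
      abel
    rw [h3, Matrix.of_apply]
    have hc : ((⟨a.1, by omega⟩ : Fin n) : ℕ) < m ∧ m ≤ ((⟨m + b.1, by omega⟩ : Fin n) : ℕ) := by
      constructor <;> simp
    rw [dif_pos hc]
    congr 1 <;> apply Fin.ext <;> simp

end ElemAbAux2


open Matrix Polynomial Module Submodule ElemAbAux ElemAbAux2

/-- An elementary abelian `p`-subgroup: an abelian subgroup of exponent dividing `p`. -/
def IsElemAbelian (p : ℕ) {G : Type*} [Group G] (E : Subgroup G) : Prop :=
  (∀ g ∈ E, ∀ h ∈ E, g * h = h * g) ∧ ∀ g ∈ E, g ^ p = 1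

lemma half_mul (n : ℕ) : (n - n/2) * (n / 2) = n^2/4 := by
  obtain ⟨r, hr | hr⟩ : ∃ r, n = 2*r ∨ n = 2*r+1 := ⟨n/2, by omega⟩
  · subst hr
    have h1 : (2*r)^2 = 4*(r*r) := by ring
    have h2 : (2*r - (2*r)/2) * ((2*r)/2) = r*r := by
      have h3 : (2*r)/2 = r := by omega
      rw [h3]
      have h4 : 2*r - r = r := by omega
      rw [h4]
    omega
  · subst hr
    have h1 : (2*r+1)^2 = 4*(r*(r+1)) + 1 := by ring
    have h2 : (2*r+1 - (2*r+1)/2) * ((2*r+1)/2) = r*(r+1) := by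
      have : (2*r+1)/2 = r := by omega
      rw [this]
      have : 2*r+1 - r = r+1 := by omega
      rw [this]
      ring
    omega

/-- Let `p ≥ n` be a prime and `q = p^d`.  Every elementary abelian
`p`-subgroup of `GL_n(𝔽_q)` has order at most `q^⌊n²/4⌋`, and there is an elementary
abelian `p`-subgroup of `GL_n(𝔽_q)` of order exactly `q^⌊n²/4⌋`; i.e. the largest rank
of an elementary abelian `p`-subgroup of `GL_n(𝔽_q)` is `⌊n²/4⌋·d`. -/
theorem max_rank_elementary_abelian {p d n : ℕ} (hp : p.Prime) (hnp : n ≤ p)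
    {k : Type*} [Field k] [Fintype k] [CharP k p] (hq : Fintype.card k = p ^ d) :
    (∀ E : Subgroup (GL (Fin n) k), IsElemAbelian p E →
      Nat.card E ≤ (p ^ d) ^ (n ^ 2 / 4)) ∧
    ∃ E : Subgroup (GL (Fin n) k), IsElemAbelian p E ∧
      Nat.card E = (p ^ d) ^ (n ^ 2 / 4) := by
  classical
  have hq2 : (1:ℕ) < Fintype.card k := Fintype.one_lt_card
  have hd : d ≠ 0 := by
    intro h
    rw [h, pow_zero] at hq
    omega
  have hnk : n ≤ Fintype.card k := by
    rw [hq]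
    calc n ≤ p := hnp
      _ ≤ p ^ d := Nat.le_self_pow hd p
  constructor
  · -- upper bound
    intro E hE
    set S : Set (Matrix (Fin n) (Fin n) k) :=
      (fun g : GL (Fin n) k => (g : Matrix (Fin n) (Fin n) k) - 1) '' E with hS
    set L := Submodule.span k S with hL
    have hScomm : ∀ x ∈ S, ∀ y ∈ S, Commute x y := by
      rintro x ⟨g, hg, rfl⟩ y ⟨h, hh, rfl⟩
      have h1 : g * h = h * g := hE.1 g hg h hh
      have hval : Commute (g : Matrix (Fin n) (Fin n) k) (h : Matrix (Fin n) (Fin n) k) := by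
        show _ = _
        rw [← Units.val_mul, ← Units.val_mul, h1]
      exact (hval.sub_left (Commute.one_left _)).sub_right (Commute.one_right _)
    have hLcomm : ∀ x ∈ L, ∀ y ∈ L, x * y = y * x := by
      intro x hx y hy
      refine Submodule.span_induction₂ (p := fun x y _ _ => x * y = y * x)
        (fun x y hx hy => (hScomm x hx y hy).eq) ?_ ?_ ?_ ?_ ?_ ?_ hx hy
      · intro y _; rw [zero_mul, mul_zero]
      · intro x _; rw [zero_mul, mul_zero]
      · intro a b c _ _ _ h1 h2; rw [add_mul, mul_add, h1, h2]
      · intro a b c _ _ _ h1 h2; rw [mul_add, add_mul, h1, h2]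
      · intro r a b _ _ h1; rw [smul_mul_assoc, mul_smul_comm, h1]
      · intro r a b _ _ h1; rw [mul_smul_comm, smul_mul_assoc, h1]
    have hSnil : ∀ x ∈ S, IsNilpotent x := by
      rintro x ⟨g, hg, rfl⟩
      have hgp : g ^ p = 1 := hE.2 g hg
      have hgv : (g : Matrix (Fin n) (Fin n) k) ^ p = 1 := by
        rw [← Units.val_pow_eq_pow_val, hgp, Units.val_one]
      refine ⟨p, ?_⟩
      rcases Nat.eq_zero_or_pos n with h0 | h0
      · subst h0
        ext i j
        exact Fin.elim0 i
      · haveI : Nonempty (Fin n) := ⟨⟨0, h0⟩⟩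
        haveI : Fact p.Prime := ⟨hp⟩
        calc ((g : Matrix (Fin n) (Fin n) k) - 1) ^ p
            = (g : Matrix (Fin n) (Fin n) k) ^ p - 1 ^ p :=
              sub_pow_char_of_commute p (Commute.one_right _)
          _ = 0 := by rw [hgv, one_pow, sub_self]
    have hLnil : ∀ x ∈ L, IsNilpotent x := by
      intro x hx
      refine Submodule.span_induction (p := fun x _ => IsNilpotent x)
        hSnil (IsNilpotent.zero) ?_ (fun c x _ h => h.smul c) hx
      intro a b ha hb h1 h2
      exact Commute.isNilpotent_add (hLcomm a ha b hb) h1 h2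
    have hdim : finrank k L ≤ n^2/4 := schur_nilpotent hnk L hLcomm hLnil
    -- inject E into L
    have hmem : ∀ g : E, ((g : GL (Fin n) k) : Matrix (Fin n) (Fin n) k) - 1 ∈ L :=
      fun g => Submodule.subset_span ⟨(g : GL (Fin n) k), g.2, rfl⟩
    have hinj : Function.Injective
        (fun g : E => (⟨((g : GL (Fin n) k) : Matrix (Fin n) (Fin n) k) - 1, hmem g⟩ : L)) := by
      intro g h hgh
      have h1 : ((g : GL (Fin n) k) : Matrix (Fin n) (Fin n) k) - 1
          = ((h : GL (Fin n) k) : Matrix (Fin n) (Fin n) k) - 1 := congrArg Subtype.val hgh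
      have h2 : ((g : GL (Fin n) k) : Matrix (Fin n) (Fin n) k)
          = ((h : GL (Fin n) k) : Matrix (Fin n) (Fin n) k) := by
        have := congrArg (· + (1 : Matrix (Fin n) (Fin n) k)) h1
        simpa [sub_add_cancel] using this
      exact Subtype.ext (Units.ext h2)
    have hcard1 : Nat.card E ≤ Nat.card L := Nat.card_le_card_of_injective _ hinj
    have hcard2 : Nat.card L = Fintype.card k ^ finrank k L := by
      haveI := Fintype.ofFinite L
      rw [Nat.card_eq_fintype_card]
      exact card_eq_pow_finrank
    calc Nat.card E ≤ Nat.card L := hcard1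
      _ = Fintype.card k ^ finrank k L := hcard2
      _ ≤ Fintype.card k ^ (n^2/4) := Nat.pow_le_pow_right (by omega) hdim
      _ = (p^d) ^ (n^2/4) := by rw [hq]
  · -- lower bound: the block subgroup
    refine ⟨blockSubgroup (n := n) (k := k) (n/2), ⟨?_, ?_⟩, ?_⟩
    · intro g hg h hh
      exact blockSubgroup_comm hg hh
    · intro g hg
      exact blockSubgroup_pow_p hg
    · have hcongr := Nat.card_congr (blockEquiv (n := n) (k := k) (n/2) (Nat.div_le_self n 2))
      rw [hcongr, Nat.card_eq_fintype_card]
      rw [Fintype.card_fun, Fintype.card_fun, Fintype.card_fin, Fintype.card_fin, hq,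
        ← pow_mul, ← half_mul n]
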